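/- Let H be a normal subgroup of a group G such that the quotient G/H is bounded, with b a positive integer bounding the orders of all finite subgroups of G/H. Then G is Jordan if and only if H is Jordan; moreover, if every finite subgroup of H contains an abelian normal subgroup of index at most j, then every finite subgroup F of G contains an abelian subgroup normal in F of index at most b · j^b. In particular J_G ≤ b_{G/H} · (J_H)^{b_{G/H}}. -/

import Mathlib

open Subgroup

/-- A group `G` is *Jordan with constant* `d` if every finite subgroup `K` of `G`
contains an abelian subgroup that is normal in `K` and has index at most `d` in `K`. -/
def IsJordanWith (G : Type*) [Group G] (d : ℕ) : Prop :=
  ∀ K : Subgroup G, Finite K →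
    ∃ A : Subgroup K, A.Normal ∧ IsMulCommutative A ∧ A.index ≤ d

/-- A group `G` is *Jordan* if some positive integer `d` witnesses the Jordan property. -/
def IsJordanGroup (G : Type*) [Group G] : Prop :=
  ∃ d : ℕ, 0 < d ∧ IsJordanWith G d


section aux

variable {G₁ G₂ : Type*} [Group G₁] [Group G₂]

/-- A subgroup of a commutative subgroup is commutative. -/
lemma isCommutative_of_le {S T : Subgroup G₁} (h : S ≤ T) (hT : IsMulCommutative T) :
    IsMulCommutative S :=
  ⟨⟨fun a b => Subtype.ext <| by
    haveI := hT
    exact mul_comm_of_mem_isMulCommutative T (h a.2) (h b.2)⟩⟩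

lemma isJordanWith_of_injective (f : G₁ →* G₂) (hf : Function.Injective f) {d : ℕ}
    (h : IsJordanWith G₂ d) : IsJordanWith G₁ d := by
  intro K hK
  have e := K.equivMapOfInjective f hf
  have hfin : Finite (K.map f) := Finite.of_equiv _ e.toEquiv
  obtain ⟨A, hAn, hAc, hAi⟩ := h (K.map f) hfin
  refine ⟨A.comap e.toMonoidHom, hAn.comap _, ?_, ?_⟩
  · haveI := hAc
    exact A.comap_injective_isMulCommutative e.injective
  · rw [index_comap_of_surjective _ e.surjective]
    exact hAi

/-- conjugation stabilizes a subgroup if it stabilizes it set-wise in both directions -/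
lemma map_conj_eq_self {S : Subgroup G₁} {g : G₁}
    (h1 : ∀ x ∈ S, g * x * g⁻¹ ∈ S) (h2 : ∀ x ∈ S, g⁻¹ * x * g ∈ S) :
    S.map (MulAut.conj g).toMonoidHom = S := by
  apply le_antisymm
  · rintro _ ⟨x, hx, rfl⟩
    exact h1 x hx
  · intro x hx
    refine ⟨g⁻¹ * x * g, h2 x hx, ?_⟩
    simp [mul_assoc]

/-- The key construction: the normal core of an `N`-stable subgroup. -/
lemma core_bound {K : Type*} [Group K] [Finite K] (N A : Subgroup K) [hNn : N.Normal]
    (hAN : A ≤ N)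
    (hnorm : ∀ n ∈ N, ∀ a ∈ A, n * a * n⁻¹ ∈ A) {b j : ℕ} (hj : 0 < j)
    (hNb : N.index ≤ b) (hAj : A.relIndex N ≤ j) :
    A.normalCore.index ≤ b * j ^ b := by
  classical
  set c : K → MonoidHom K K := fun g => (MulAut.conj g).toMonoidHom with hc
  have hstab : ∀ n ∈ N, A.map (c n) = A := by
    intro n hn
    exact map_conj_eq_self (hnorm n hn) (fun x hx => by simpa using hnorm n⁻¹ (N.inv_mem hn) x hx)
  have hmul : ∀ g h : K, A.map (c (g * h)) = (A.map (c h)).map (c g) := by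
    intro g h
    rw [Subgroup.map_map]
    congr 1
    ext x
    simp [hc, mul_assoc]
  have hwd : ∀ g g' : K, (QuotientGroup.leftRel N) g g' → A.map (c g) = A.map (c g') := by
    intro g g' hgg'
    rw [QuotientGroup.leftRel_apply] at hgg'
    have : g' = g * (g⁻¹ * g') := by group
    rw [this, hmul, hstab _ hgg']
  set F : K ⧸ N → Subgroup K := Quotient.lift (fun g => A.map (c g)) hwd with hF
  have hFmk : ∀ g : K, F (QuotientGroup.mk g) = A.map (c g) := fun g => rfl
  have hcore : A.normalCore = ⨅ q : K ⧸ N, F q := by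
    ext x
    simp only [Subgroup.mem_iInf]
    constructor
    · intro hx q
      induction q using QuotientGroup.induction_on with
      | H g =>
        rw [hFmk]
        refine ⟨g⁻¹ * x * g, ?_, ?_⟩
        · have := hx g⁻¹
          simpa using this
        · simp [hc, mul_assoc]
    · intro hx g
      have := hx (QuotientGroup.mk g⁻¹)
      rw [hFmk] at this
      obtain ⟨a, ha, hax⟩ := this
      have : a = g * x * g⁻¹ := by
        simp only [hc, MulEquiv.coe_toMonoidHom, MulAut.conj_apply] at hax
        rw [← hax]
        group
      rwa [← this]
  have hcoreA : A.normalCore ≤ A := A.normalCore_le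
  have hcoreN : A.normalCore ≤ N := hcoreA.trans hAN
  haveI : Fintype (K ⧸ N) := Fintype.ofFinite _
  have hrel : A.normalCore.relIndex N ≤ j ^ b := by
    rw [hcore]
    refine le_trans (Subgroup.relIndex_iInf_le F) ?_
    have h1 : ∀ q : K ⧸ N, (F q).relIndex N ≤ j := by
      intro q
      induction q using QuotientGroup.induction_on with
      | H g =>
        rw [hFmk]
        have hNg : N.map (c g) = N := map_conj_eq_self
          (fun x hx => hNn.conj_mem x hx g)
          (fun x hx => by simpa using hNn.conj_mem x hx g⁻¹)
        have : (A.map (c g)).relIndex (N.map (c g)) = A.relIndex N := by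
          rw [← Subgroup.relIndex_comap, Subgroup.comap_map_eq_self_of_injective
            (MulEquiv.injective _)]
        rw [hNg] at this
        rw [this]
        exact hAj
    calc ∏ q : K ⧸ N, (F q).relIndex N ≤ ∏ _q : K ⧸ N, j :=
          Finset.prod_le_prod' fun q _ => h1 q
      _ = j ^ Fintype.card (K ⧸ N) := by simp [Finset.prod_const, Finset.card_univ]
      _ ≤ j ^ b := Nat.pow_le_pow_right hj (by
          rwa [← Nat.card_eq_fintype_card, ← Subgroup.index])
  calc A.normalCore.index = A.normalCore.relIndex N * N.index :=
        (Subgroup.relIndex_mul_index hcoreN).symm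
    _ ≤ j ^ b * b := Nat.mul_le_mul hrel hNb
    _ = b * j ^ b := mul_comm _ _

end aux

/-- If `H` is normal in `G` and `G ⧸ H` is bounded (all finite subgroups of order at most `b`),
then `G` is Jordan iff `H` is, and a witness `j` for `H` yields the witness `b * j ^ b`
for `G`. -/
theorem isJordanGroup_iff_of_bounded_quotient {G : Type*} [Group G] (H : Subgroup G) [H.Normal]
    (b : ℕ) (hb : 0 < b) (hbound : ∀ K : Subgroup (G ⧸ H), Finite K → Nat.card K ≤ b) :
    (IsJordanGroup G ↔ IsJordanGroup H) ∧
    (∀ j : ℕ, 0 < j → IsJordanWith H j → IsJordanWith G (b * j ^ b)) := by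
  have key : ∀ j : ℕ, 0 < j → IsJordanWith H j → IsJordanWith G (b * j ^ b) := by
    intro j hj hHj K hK
    set φ := QuotientGroup.mk' H with hφ
    set N : Subgroup K := H.subgroupOf K with hN
    haveI : N.Normal := Subgroup.normal_subgroupOf
    have hNb : N.index ≤ b := by
      have hfin : Finite (K.map φ) := by
        refine Finite.of_surjective
          (fun k : K => (⟨φ k, Subgroup.mem_map_of_mem φ k.2⟩ : K.map φ)) ?_
        rintro ⟨x, y, hy, rfl⟩
        exact ⟨⟨y, hy⟩, rfl⟩
      have hbK := hbound (K.map φ) hfin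
      have h1 : H.relIndex K = φ.ker.relIndex K := by rw [QuotientGroup.ker_mk']
      have : N.index = Nat.card (K.map φ) := by
        rw [hN]
        show H.relIndex K = _
        rw [h1, Subgroup.relIndex_ker]
      rw [this]
      exact hbK
    set M : Subgroup H := K.subgroupOf H with hM
    have hMfin : Finite M := by
      refine Finite.of_injective (fun m : M => (⟨(m : H), mem_subgroupOf.mp m.2⟩ : K)) ?_
      intro x y hxy
      simp only [Subtype.mk.injEq] at hxy
      exact Subtype.ext (Subtype.ext hxy)
    obtain ⟨A, hAn, hAc, hAi⟩ := hHj M hMfin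
    set A₁ : Subgroup G := (A.map M.subtype).map H.subtype with hA₁
    have hA₁H : A₁ ≤ H := by
      rintro x ⟨y, hy, rfl⟩
      exact y.2
    have hA₁K : A₁ ≤ K := by
      rintro x ⟨y, hy, rfl⟩
      obtain ⟨a, _, rfl⟩ := hy
      exact mem_subgroupOf.mp a.2
    set A₀ : Subgroup K := A₁.subgroupOf K with hA₀
    have hA₀N : A₀ ≤ N := fun x hx => mem_subgroupOf.mpr (hA₁H (mem_subgroupOf.mp hx))
    haveI := hAc
    haveI hA₁c : IsMulCommutative A₁ := by
      haveI : IsMulCommutative (A.map M.subtype) := Subgroup.map_isMulCommutative _ _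
      exact Subgroup.map_isMulCommutative _ _
    haveI hA₀c : IsMulCommutative A₀ := by rw [hA₀]; infer_instance
    have hA₀j : A₀.relIndex N ≤ j := by
      have h1 : N = (H ⊓ K).subgroupOf K := (inf_subgroupOf_right H K).symm
      have h2 : A₀.relIndex N = A₁.relIndex (H ⊓ K) := by
        rw [h1, hA₀, relIndex_subgroupOf inf_le_right]
      have h3 : H ⊓ K = M.map H.subtype := by
        rw [hM, subgroupOf_map_subtype, inf_comm]
      rw [h2, h3, hA₁, ← Subgroup.relIndex_comap,
        Subgroup.comap_map_eq_self_of_injective (subtype_injective H),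
        Subgroup.relIndex, Subgroup.subgroupOf,
        Subgroup.comap_map_eq_self_of_injective (subtype_injective M)]
      exact hAi
    have hnorm : ∀ n ∈ N, ∀ a ∈ A₀, n * a * n⁻¹ ∈ A₀ := by
      intro n hn a ha
      rw [hA₀, mem_subgroupOf] at ha ⊢
      have hnH : (n : G) ∈ H := mem_subgroupOf.mp hn
      set m : M := ⟨⟨(n : G), hnH⟩, mem_subgroupOf.mpr n.2⟩ with hm
      obtain ⟨y, hy, hyy⟩ := ha
      obtain ⟨a', ha', rfl⟩ := hy
      refine mem_map.mpr ⟨M.subtype (m * a' * m⁻¹),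
        mem_map.mpr ⟨m * a' * m⁻¹, hAn.conj_mem a' ha' m, rfl⟩, ?_⟩
      have : (H.subtype) ((M.subtype) (m * a' * m⁻¹))
          = (n : G) * ((H.subtype) ((M.subtype) a')) * (n : G)⁻¹ := by
        simp [hm]
      rw [this, hyy]
      push_cast
      ring_nf
    refine ⟨A₀.normalCore, inferInstance,
      isCommutative_of_le A₀.normalCore_le hA₀c, ?_⟩
    exact core_bound N A₀ hA₀N hnorm hj hNb hA₀j
  refine ⟨⟨?_, ?_⟩, key⟩
  · rintro ⟨d, hd, hG⟩
    exact ⟨d, hd, isJordanWith_of_injective H.subtype (subtype_injective H) hG⟩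
  · rintro ⟨j, hj, hHj⟩
    exact ⟨b * j ^ b, by positivity, key j hj hHj⟩
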